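/- The inverse of the monotone domination order ⪯ is a simulation on the region-abstracted transition system H: whenever W₁ ⪯ W₂ and W₂ --a--> W₂' in H, there exists W₁' such that W₁ --a--> W₁' in H and W₁' ⪯ W₂'. -/

import Mathlib

/-- Clock constraints over a set `C` of clocks: comparisons with natural
number constants, closed under conjunction and negation. -/
inductive ClockConstraint (C : Type) : Type where
  | lt : C → ℕ → ClockConstraint C
  | le : C → ℕ → ClockConstraint C
  | conj : ClockConstraint C → ClockConstraint C → ClockConstraint C
  | neg : ClockConstraint C → ClockConstraint C

/-- Satisfaction of a clock constraint by a clock valuation. -/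
def ClockConstraint.sat {C : Type} (v : C → NNReal) : ClockConstraint C → Prop
  | .lt x c => (v x : ℝ) < (c : ℝ)
  | .le x c => (v x : ℝ) ≤ (c : ℝ)
  | .conj s t => s.sat v ∧ t.sat v
  | .neg s => ¬ s.sat v

/-- Positive boolean formulas over a set `X` of propositions. -/
inductive PosBool (X : Type) : Type where
  | atom : X → PosBool X
  | conj : PosBool X → PosBool X → PosBool X
  | disj : PosBool X → PosBool X → PosBool X

/-- Evaluation of a positive boolean formula under a valuation of atoms. -/
def PosBool.eval {X : Type} (f : X → Prop) : PosBool X → Prop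
  | .atom x => f x
  | .conj b c => b.eval f ∧ c.eval f
  | .disj b c => b.eval f ∨ c.eval f

/-- A positive boolean formula is disjunction-free (purely conjunctive). -/
def PosBool.orFree {X : Type} : PosBool X → Prop
  | .atom _ => True
  | .conj b c => b.orFree ∧ c.orFree
  | .disj _ _ => False

/-- A positive boolean formula is conjunction-free (purely disjunctive). -/
def PosBool.andFree {X : Type} : PosBool X → Prop
  | .atom _ => True
  | .conj _ _ => False
  | .disj b c => b.andFree ∧ c.andFree

open Classical in
/-- Reset the clocks in `r` to zero. -/
noncomputable def resetVal {C : Type} (v : C → NNReal) (r : Set C) : C → NNReal :=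
  fun x => if x ∈ r then 0 else v x

/-- A (finite) timed word: each letter comes with the delay elapsed since the
previous letter (a nonnegative real). -/
abbrev TimedWord (A : Type) : Type := List (A × NNReal)
/-- A one-clock alternating timed automaton whose transition formulas are in
disjunctive normal form: for each location and letter, a finite list of
pairs (guard, DNF), where a DNF is a nonempty list of disjuncts, each
disjunct a nonempty list of atoms `(target location, reset flag)`.  The
`partition` field is the Partition condition. -/
structure ATA1 (A Q : Type) where
  init : Q
  accept : Set Q
  trans : Q → A → List (ClockConstraint Unit × List (List (Q × Bool)))
  partition : ∀ (q : Q) (a : A) (v : NNReal),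
    ∃! gb : ClockConstraint Unit × List (List (Q × Bool)),
      gb ∈ trans q a ∧ gb.1.sat (fun _ => v)
  dnf_nonempty : ∀ (q : Q) (a : A), ∀ gb ∈ trans q a,
    gb.2 ≠ [] ∧ ∀ d ∈ gb.2, d ≠ []

/-- Acceptance of a timed word (delay time-stamps) from a configuration:
Eve picks a disjunct, and all its atoms must accept the rest of the word. -/
def ATA1.AccFrom {A Q : Type} (M : ATA1 A Q) : TimedWord A → Q → NNReal → Prop
  | [], q, _ => q ∈ M.accept
  | (a, t) :: w, q, v =>
      ∃ gb ∈ M.trans q a, gb.1.sat (fun _ => v + t) ∧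
        ∃ d ∈ gb.2, ∀ qb ∈ d, M.AccFrom w qb.1 (if qb.2 then 0 else v + t)

/-- The timed language of a one-clock DNF alternating timed automaton. -/
def ATA1.lang {A Q : Type} (M : ATA1 A Q) : Set (TimedWord A) :=
  { w | M.AccFrom w M.init 0 }

/-- One transition of the transition system `T`: states are finite sets of
configurations `(q, v)`; on `(a, t)` every configuration advances by `t`,
one disjunct of the (unique) applicable transition formula is chosen for
each configuration, and the resulting configurations are collected. -/
def ATA1.Tstep {A Q : Type} (M : ATA1 A Q) (a : A) (t : NNReal)
    (P P' : Set (Q × NNReal)) : Prop :=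
  ∃ choice : Q × NNReal → List (Q × Bool),
    (∀ c ∈ P, ∃ gb ∈ M.trans c.1 a, gb.1.sat (fun _ => c.2 + t) ∧ choice c ∈ gb.2) ∧
    P' = ⋃ c ∈ P, { c' | ∃ qb ∈ choice c, c' = (qb.1, if qb.2 then 0 else c.2 + t) }

/-- A transition of the untimed transition system `T̂`: a transition of `T`
with the time information erased. -/
def ATA1.UStep {A Q : Type} (M : ATA1 A Q) (a : A) (P P' : Set (Q × NNReal)) : Prop :=
  ∃ t : NNReal, M.Tstep a t P P'

/-- A state of `T` (or `T̂`) is bad iff all its locations are accepting. -/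
def ATA1.Bad {A Q : Type} (M : ATA1 A Q) (P : Set (Q × NNReal)) : Prop :=
  ∀ c ∈ P, c.1 ∈ M.accept
/-- The largest constant occurring in a clock constraint. -/
def ClockConstraint.maxConst {C : Type} : ClockConstraint C → ℕ
  | .lt _ c => c
  | .le _ c => c
  | .conj s t => max s.maxConst t.maxConst
  | .neg s => s.maxConst

/-- The largest constant `c_max` occurring in the transition function. -/
noncomputable def ATA1.cmax {A Q : Type} [Fintype A] [Fintype Q] (M : ATA1 A Q) : ℕ :=
  Finset.univ.sup fun q : Q => Finset.univ.sup fun a : A =>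
    ((M.trans q a).map fun gb => gb.1.maxConst).foldr max 0

open Classical in
/-- The index of the region of a clock value `v`, for maximal constant `K`:
the regions `{0}, (0,1), {1}, (1,2), …, {K}, (K,∞)` are numbered
`0, 1, …, 2K, 2K+1`. -/
noncomputable def regIdx (K : ℕ) (v : NNReal) : ℕ :=
  if (K : NNReal) < v then 2 * K + 1
  else if (⌊v⌋₊ : NNReal) = v then 2 * ⌊v⌋₊ else 2 * ⌊v⌋₊ + 1

/-- `W = H(P)`: the word `W` over `Λ = 𝒫(Q × reg)` is obtained from the set
`P` of configurations by replacing each `(q, v)` by `(q, reg v, fract v)`,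
sorting by the fractional parts, grouping configurations with equal
fractional parts into one letter, and forgetting the fractional parts. -/
def IsAbstraction {Q : Type} (K : ℕ) (P : Set (Q × NNReal))
    (W : List (Set (Q × ℕ))) : Prop :=
  ∃ fs : List ℝ,
    fs.Pairwise (· < ·) ∧
    (∀ f : ℝ, f ∈ fs ↔ ∃ c ∈ P, Int.fract (c.2 : ℝ) = f) ∧
    W.length = fs.length ∧
    ∀ (i : ℕ) (hw : i < W.length) (hi : i < fs.length),
      W.get ⟨i, hw⟩ =
        { qr | ∃ c ∈ P, Int.fract (c.2 : ℝ) = fs.get ⟨i, hi⟩ ∧ qr = (c.1, regIdx K c.2) }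

/-- A transition (labelled by letter `a`) of the region-abstracted transition
system `H`: there are states `P`, `P'` of `T̂` with a transition
`P --a--> P'` whose abstractions are the two given words. -/
def HStep {A Q : Type} [Fintype A] [Fintype Q] (M : ATA1 A Q) (a : A)
    (W W' : List (Set (Q × ℕ))) : Prop :=
  ∃ P P' : Set (Q × NNReal), P.Finite ∧
    IsAbstraction M.cmax P W ∧ IsAbstraction M.cmax P' W' ∧ M.UStep a P P'

/-- A state of `H` is bad iff every location occurring in one of its letters
is accepting. -/
def BadW {Q : Type} (F : Set Q) (W : List (Set (Q × ℕ))) : Prop :=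
  ∀ s ∈ W, ∀ qr ∈ s, qr.1 ∈ F

/-- The monotone domination ordering on words over a powerset alphabet:
`W₁ ⪯ W₂` iff there is a strictly increasing map of positions along which
the letters of `W₁` are included in those of `W₂`. -/
def MonDom {X : Type} (W₁ W₂ : List (Set X)) : Prop :=
  ∃ f : Fin W₁.length → Fin W₂.length,
    StrictMono f ∧ ∀ i : Fin W₁.length, W₁.get i ⊆ W₂.get (f i)




open Classical in
/-- Every finite set of configurations has an abstraction. -/
lemma exists_abstraction {Q : Type} (K : ℕ) {P : Set (Q × NNReal)} (h : P.Finite) :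
    ∃ W, IsAbstraction K P W := by
  classical
  set S : Finset ℝ := h.toFinset.image (fun c => Int.fract (c.2 : ℝ)) with hS
  set fs := S.sort (· ≤ ·) with hfs
  refine ⟨fs.map (fun fv => {qr | ∃ c ∈ P, Int.fract (c.2 : ℝ) = fv ∧
      qr = (c.1, regIdx K c.2)}), fs, (Finset.sortedLT_sort S).pairwise, ?_, by simp, ?_⟩
  · intro fv
    constructor
    · intro hfv
      have : fv ∈ S := (Finset.mem_sort _).1 hfv
      simp only [hS, Finset.mem_image, Set.Finite.mem_toFinset] at this
      obtain ⟨c, hc, hfc⟩ := this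
      exact ⟨c, hc, hfc⟩
    · rintro ⟨c, hc, hfc⟩
      refine (Finset.mem_sort _).2 ?_
      simp only [hS, Finset.mem_image, Set.Finite.mem_toFinset]
      exact ⟨c, hc, hfc⟩
  · intro i hw hi
    simp [List.get_eq_getElem, List.getElem_map]

/-- Strict monotonicity of `get` on strictly sorted lists. -/
lemma sorted_get_lt {l : List ℝ} (hs : l.Pairwise (· < ·)) {i j : Fin l.length}
    (hij : i < j) : l.get i < l.get j :=
  List.pairwise_iff_get.1 hs i j hij

open Classical in
/-- If `P ⊆ P'` then any abstractions satisfy the monotone domination order. -/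
lemma monDom_of_subset {Q : Type} {K : ℕ} {P P' : Set (Q × NNReal)}
    {W W' : List (Set (Q × ℕ))} (hss : P ⊆ P')
    (h1 : IsAbstraction K P W) (h2 : IsAbstraction K P' W') : MonDom W W' := by
  classical
  obtain ⟨fs, hs1, hm1, hl1, hg1⟩ := h1
  obtain ⟨fs', hs2, hm2, hl2, hg2⟩ := h2
  have hmem : ∀ i : Fin W.length, fs.get ⟨i, hl1 ▸ i.2⟩ ∈ fs' := by
    intro i
    obtain ⟨c, hc, hfc⟩ := (hm1 _).1 (List.get_mem fs ⟨i, hl1 ▸ i.2⟩)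
    exact (hm2 _).2 ⟨c, hss hc, hfc⟩
  have hidx : ∀ i : Fin W.length,
      fs'.idxOf (fs.get ⟨i, hl1 ▸ i.2⟩) < W'.length := fun i =>
    hl2 ▸ List.idxOf_lt_length_iff.2 (hmem i)
  have hval : ∀ i : Fin W.length,
      fs'.get ⟨fs'.idxOf (fs.get ⟨i, hl1 ▸ i.2⟩), List.idxOf_lt_length_iff.2 (hmem i)⟩
        = fs.get ⟨i, hl1 ▸ i.2⟩ := fun i => List.getElem_idxOf _
  refine ⟨fun i => ⟨fs'.idxOf (fs.get ⟨i, hl1 ▸ i.2⟩), hidx i⟩, ?_, ?_⟩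
  · intro i j hij
    have hlt : fs.get ⟨i, hl1 ▸ i.2⟩ < fs.get ⟨j, hl1 ▸ j.2⟩ := sorted_get_lt hs1 hij
    rw [Fin.lt_def]
    by_contra hle
    push_neg at hle
    rcases lt_or_eq_of_le hle with hlt2 | heq
    · have := sorted_get_lt hs2
        (i := ⟨fs'.idxOf (fs.get ⟨j, hl1 ▸ j.2⟩), List.idxOf_lt_length_iff.2 (hmem j)⟩)
        (j := ⟨fs'.idxOf (fs.get ⟨i, hl1 ▸ i.2⟩), List.idxOf_lt_length_iff.2 (hmem i)⟩)
        hlt2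
      rw [hval i, hval j] at this
      exact absurd (this.trans hlt) (lt_irrefl _)
    · have : fs.get ⟨j, hl1 ▸ j.2⟩ = fs.get ⟨i, hl1 ▸ i.2⟩ := by
        rw [← hval i, ← hval j]
        congr 1
        exact Fin.ext heq
      exact absurd (this ▸ hlt) (lt_irrefl _)
  · intro i qr hqr
    have e1 := hg1 i i.2 (hl1 ▸ i.2)
    have e2 := hg2 (fs'.idxOf (fs.get ⟨i, hl1 ▸ i.2⟩)) (hidx i)
      (List.idxOf_lt_length_iff.2 (hmem i))
    rw [e2]
    rw [e1] at hqr
    obtain ⟨c, hc, hfc, hqr⟩ := hqr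
    exact ⟨c, hss hc, by rw [hval i]; exact hfc, hqr⟩

theorem monotone_domination_inverse_simulation
    {A Q : Type} [Fintype A] [Fintype Q] (M : ATA1 A Q)
    {W₁ W₂ W₂' : List (Set (Q × ℕ))} {a : A}
    (hW₁ : ∃ P₁ : Set (Q × NNReal), P₁.Finite ∧ IsAbstraction M.cmax P₁ W₁)
    (hdom : MonDom W₁ W₂) (hstep : HStep M a W₂ W₂') :
    ∃ W₁' : List (Set (Q × ℕ)), HStep M a W₁ W₁' ∧ MonDom W₁' W₂' := by
  classical
  obtain ⟨P₁, hP₁fin, fs₁, hs₁, hm₁, hl₁, hg₁⟩ := hW₁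
  obtain ⟨f, hfmono, hfsub⟩ := hdom
  obtain ⟨P₂, P₂', hP₂fin, hab₂, hab₂', t, ch, hch, hP₂'def⟩ := hstep
  obtain ⟨fs₂, hs₂, hm₂, hl₂, hg₂⟩ := hab₂
  set K := M.cmax with hK
  have hfi : ∀ i : Fin W₁.length, (f i : ℕ) < fs₂.length := fun i => hl₂ ▸ (f i).2
  set g : Fin W₁.length → ℝ := fun i => fs₂.get ⟨f i, hfi i⟩ with hgdef
  have hgmono : StrictMono g := by
    intro i j hij
    exact sorted_get_lt hs₂ (Fin.mk_lt_mk.2 (Fin.lt_def.1 (hfmono hij)))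
  set P : Set (Q × NNReal) := { c | c ∈ P₂ ∧ ∃ i : Fin W₁.length,
      Int.fract (c.2 : ℝ) = g i ∧ (c.1, regIdx K c.2) ∈ W₁.get i } with hPdef
  have hPsub : P ⊆ P₂ := fun c hc => hc.1
  have hPfin : P.Finite := hP₂fin.subset hPsub
  have hne : ∀ i : Fin W₁.length, ∃ qr, qr ∈ W₁.get i := by
    intro i
    obtain ⟨c, hc, hfc⟩ := (hm₁ _).1 (List.get_mem fs₁ ⟨i, hl₁ ▸ i.2⟩)
    refine ⟨(c.1, regIdx K c.2), ?_⟩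
    rw [hg₁ i i.2 (hl₁ ▸ i.2)]
    exact ⟨c, hc, hfc, rfl⟩
  have hW₂get : ∀ i : Fin W₁.length, W₂.get (f i) =
      { qr | ∃ c ∈ P₂, Int.fract (c.2 : ℝ) = g i ∧ qr = (c.1, regIdx K c.2) } :=
    fun i => hg₂ (f i) (f i).2 (hfi i)
  -- P abstracts W₁
  have habsP : IsAbstraction K P W₁ := by
    refine ⟨List.ofFn g, (List.sortedLT_ofFn_iff.2 hgmono).pairwise, ?_, (List.length_ofFn (f := g)).symm, ?_⟩
    · intro fv
      rw [List.mem_ofFn]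
      constructor
      · rintro ⟨i, rfl⟩
        obtain ⟨qr, hqr⟩ := hne i
        have h2 : qr ∈ W₂.get (f i) := hfsub i hqr
        rw [hW₂get i] at h2
        obtain ⟨c, hc, hfc, hqre⟩ := h2
        exact ⟨c, ⟨hc, i, hfc, hqre ▸ hqr⟩, hfc⟩
      · rintro ⟨c, ⟨_, i, hfc, _⟩, rfl⟩
        exact ⟨i, hfc.symm⟩
    · intro i hw hi
      have hcast : (List.ofFn g).get ⟨i, hi⟩ = g ⟨i, hw⟩ := by
        rw [List.get_ofFn]
        congr 1
      ext qr
      constructor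
      · intro hqr
        have h2 : qr ∈ W₂.get (f ⟨i, hw⟩) := hfsub ⟨i, hw⟩ hqr
        rw [hW₂get ⟨i, hw⟩] at h2
        obtain ⟨c, hc, hfc, hqre⟩ := h2
        exact ⟨c, ⟨hc, ⟨i, hw⟩, hfc, hqre ▸ hqr⟩, by rw [hcast]; exact hfc, hqre⟩
      · rintro ⟨c, ⟨_, j, hfcj, hmemj⟩, hfc, rfl⟩
        rw [hcast] at hfc
        have : j = ⟨i, hw⟩ := hgmono.injective (hfcj.symm.trans hfc)
        exact this ▸ hmemj
  -- the restricted step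
  set P' : Set (Q × NNReal) := ⋃ c ∈ P,
      { c' | ∃ qb ∈ ch c, c' = (qb.1, if qb.2 then 0 else c.2 + t) } with hP'def2
  have hP'sub : P' ⊆ P₂' := by
    rw [hP₂'def]
    exact Set.biUnion_mono hPsub (fun c _ => subset_rfl)
  have hP'fin : P'.Finite := by
    refine Set.Finite.biUnion hPfin (fun c _ => ?_)
    have he : { c' : Q × NNReal | ∃ qb ∈ ch c, c' = (qb.1, if qb.2 then 0 else c.2 + t) }
        = (fun qb : Q × Bool => (qb.1, if qb.2 then 0 else c.2 + t)) '' { qb | qb ∈ ch c } := by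
      ext c'
      simp only [Set.mem_image, Set.mem_setOf_eq]
      constructor
      · rintro ⟨qb, h1, h2⟩; exact ⟨qb, h1, h2.symm⟩
      · rintro ⟨qb, h1, h2⟩; exact ⟨qb, h1, h2.symm⟩
    rw [he]
    exact ((ch c).finite_toSet).image _
  obtain ⟨W₁', habs'⟩ := exists_abstraction K hP'fin
  exact ⟨W₁', ⟨P, P', hPfin, habsP, habs', t, ch, fun c hc => hch c (hPsub hc), rfl⟩,
    monDom_of_subset hP'sub habs' hab₂'⟩
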